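/- For all v ≥ 1 and all k ≥ 2, zcl_k(2^v − 1) = (k−1)(2^v − 1); equivalently, g_k(2^v − 1) = k(2^v − 1) − zcl_k(2^v − 1) = 2^v − 1. -/

import Mathlib

open MvPolynomial in
/-- `zcl k n` is the maximum of `a_1 + ... + a_(k-1)` over tuples of natural numbers
such that the product of the `(x_i + x_k)^(a_i)` is nonzero in
`(Z/2)[x_1, ..., x_k] / (x_1^(n+1), ..., x_k^(n+1))`. (For `k ≥ 1` the ring has
`(k-1)+1 = k` variables, the last one playing the role of `x_k`.) -/
noncomputable def zcl (k n : ℕ) : ℕ :=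
  sSup {s : ℕ | ∃ a : Fin (k - 1) → ℕ, s = ∑ i, a i ∧
    Ideal.Quotient.mk
      (Ideal.span (Set.range fun i : Fin (k - 1 + 1) =>
        (X i : MvPolynomial (Fin (k - 1 + 1)) (ZMod 2)) ^ (n + 1)))
      (∏ i : Fin (k - 1), (X i.castSucc + X (Fin.last (k - 1))) ^ a i) ≠ 0}

open MvPolynomial in
lemma prod_monomial_one {σ ι R : Type*} [CommSemiring R] (s : Finset ι) (f : ι → (σ →₀ ℕ)) :
    ∏ i ∈ s, (monomial (f i) (1 : R)) = monomial (∑ i ∈ s, f i) 1 := by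
  classical
  induction s using Finset.induction_on with
  | empty => simp
  | insert _ _ h ih =>
      rw [Finset.prod_insert h, Finset.sum_insert h, ih, monomial_mul, one_mul]

open MvPolynomial in
lemma monomial_not_mem_span {σ : Type*} [Fintype σ] (n : ℕ) (m : σ →₀ ℕ)
    (hm : ∀ j, m j ≤ n) :
    (monomial m (1 : ZMod 2) : MvPolynomial σ (ZMod 2)) ∉
      Ideal.span (Set.range fun j : σ => (X j : MvPolynomial σ (ZMod 2)) ^ (n + 1)) := by
  classical
  intro h
  rw [Ideal.mem_span_range_iff_exists_fun] at h
  obtain ⟨c, hc⟩ := h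
  have h0 := congrArg (coeff m) hc
  rw [coeff_monomial, if_pos rfl, coeff_sum] at h0
  have hz : ∀ j : σ, coeff m (c j * X j ^ (n + 1)) = 0 := by
    intro j
    rw [X_pow_eq_monomial, coeff_mul_monomial', if_neg]
    intro hle
    have := Finsupp.single_le_iff.mp hle
    exact absurd (this.trans (hm j)) (by omega)
  simp only [hz, Finset.sum_const_zero] at h0
  exact one_ne_zero h0.symm

open MvPolynomial in
/-- For all `v ≥ 1` and `k ≥ 2`, `zcl_k(2^v - 1) = (k-1)(2^v - 1)`; equivalently,
`g_k(2^v - 1) = k(2^v - 1) - zcl_k(2^v - 1) = 2^v - 1`. -/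
theorem zcl_two_pow_sub_one (v k : ℕ) (hv : 1 ≤ v) (hk : 2 ≤ k) :
    zcl k (2 ^ v - 1) = (k - 1) * (2 ^ v - 1) ∧
      k * (2 ^ v - 1) - zcl k (2 ^ v - 1) = 2 ^ v - 1 := by
  set n : ℕ := 2 ^ v - 1 with hn
  have h2 : n + 1 = 2 ^ v := Nat.sub_add_cancel (Nat.one_le_two_pow)
  set R := MvPolynomial (Fin (k - 1 + 1)) (ZMod 2) with hR
  set I : Ideal R := Ideal.span (Set.range fun i : Fin (k - 1 + 1) =>
      (X i : R) ^ (n + 1)) with hI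
  have hgen : ∀ j : Fin (k - 1 + 1), (X j : R) ^ (n + 1) ∈ I :=
    fun j => Ideal.subset_span ⟨j, rfl⟩
  have hfac : ∀ x y : R, (x + y) ^ 2 ^ v = x ^ 2 ^ v + y ^ 2 ^ v := fun x y =>
    add_pow_char_pow x y 2 v
  have hsum_mem : ∀ j j' : Fin (k - 1 + 1), ((X j : R) + X j') ^ (n + 1) ∈ I := by
    intro j j'
    rw [h2, hfac, ← h2]
    exact I.add_mem (hgen j) (hgen j')
  -- Upper bound
  have hub : ∀ s ∈ {s : ℕ | ∃ a : Fin (k - 1) → ℕ, s = ∑ i, a i ∧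
      Ideal.Quotient.mk I
        (∏ i : Fin (k - 1), (X i.castSucc + X (Fin.last (k - 1))) ^ a i) ≠ 0},
      s ≤ (k - 1) * n := by
    rintro s ⟨a, hs, hne⟩
    have ha : ∀ i : Fin (k - 1), a i ≤ n := by
      intro i
      by_contra hgt
      push_neg at hgt
      apply hne
      rw [Ideal.Quotient.eq_zero_iff_mem,
        ← Finset.mul_prod_erase _ _ (Finset.mem_univ i)]
      have hsplit : ((X i.castSucc : R) + X (Fin.last (k - 1))) ^ a i =
          ((X i.castSucc : R) + X (Fin.last (k - 1))) ^ (n + 1) *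
            ((X i.castSucc : R) + X (Fin.last (k - 1))) ^ (a i - (n + 1)) := by
        rw [← pow_add, Nat.add_sub_cancel' hgt]
      rw [hsplit, mul_assoc]
      exact Ideal.mul_mem_right _ _ (hsum_mem _ _)
    calc s = ∑ i, a i := hs
      _ ≤ ∑ _i : Fin (k - 1), n := Finset.sum_le_sum fun i _ => ha i
      _ = (k - 1) * n := by
          rw [Finset.sum_const, Finset.card_univ, Fintype.card_fin, smul_eq_mul]
  -- Lower bound: the constant tuple `n` works
  have hmem : (k - 1) * n ∈ {s : ℕ | ∃ a : Fin (k - 1) → ℕ, s = ∑ i, a i ∧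
      Ideal.Quotient.mk I
        (∏ i : Fin (k - 1), (X i.castSucc + X (Fin.last (k - 1))) ^ a i) ≠ 0} := by
    refine ⟨fun _ => n, by
      rw [Finset.sum_const, Finset.card_univ, Fintype.card_fin, smul_eq_mul], ?_⟩
    rw [Ne, Ideal.Quotient.eq_zero_iff_mem]
    intro hq
    set τ : R →ₐ[ZMod 2] R := aeval (fun j : Fin (k - 1 + 1) =>
      if j = Fin.last (k - 1) then X j else X j + X (Fin.last (k - 1))) with hτ
    have hτgen : ∀ j : Fin (k - 1 + 1), τ ((X j : R) ^ (n + 1)) ∈ I := by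
      intro j
      rw [map_pow, hτ, aeval_X]
      by_cases hj : j = Fin.last (k - 1)
      · rw [if_pos hj]; exact hgen j
      · rw [if_neg hj]; exact hsum_mem _ _
    have hτq : τ (∏ i : Fin (k - 1), (X i.castSucc + X (Fin.last (k - 1))) ^ n) ∈ I := by
      have h1 : τ (∏ i : Fin (k - 1), (X i.castSucc + X (Fin.last (k - 1))) ^ n) ∈
          I.map τ.toRingHom := Ideal.mem_map_of_mem _ hq
      have h2' : I.map τ.toRingHom ≤ I := by
        rw [hI, Ideal.map_le_iff_le_comap, Ideal.span_le]
        rintro _ ⟨j, rfl⟩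
        exact hτgen j
      exact h2' h1
    have hcompute : τ (∏ i : Fin (k - 1), (X i.castSucc + X (Fin.last (k - 1))) ^ n) =
        monomial (∑ i : Fin (k - 1), Finsupp.single i.castSucc n) 1 := by
      rw [map_prod, ← prod_monomial_one]
      refine Finset.prod_congr rfl fun i _ => ?_
      rw [map_pow, map_add, hτ, aeval_X, aeval_X,
        if_neg (Fin.castSucc_lt_last i).ne, if_pos rfl, add_assoc,
        CharTwo.add_self_eq_zero, add_zero, X_pow_eq_monomial]
    rw [hcompute] at hτq
    refine monomial_not_mem_span n _ ?_ hτq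
    intro j
    rw [Finsupp.finset_sum_apply]
    induction j using Fin.lastCases with
    | last =>
        simp [Finsupp.single_apply, (Fin.castSucc_lt_last _).ne]
    | cast i0 =>
        have : ∀ i : Fin (k - 1), (Finsupp.single i.castSucc n) i0.castSucc =
            if i = i0 then n else 0 := by
          intro i
          rw [Finsupp.single_apply]
          simp [Fin.castSucc_inj]
        simp only [this]
        rw [Finset.sum_ite_eq' Finset.univ i0 fun _ => n]
        simp
  constructor
  · exact le_antisymm (csSup_le ⟨_, hmem⟩ hub) (le_csSup ⟨(k - 1) * n, hub⟩ hmem)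
  · have h1 : zcl k n = (k - 1) * n :=
      le_antisymm (csSup_le ⟨_, hmem⟩ hub) (le_csSup ⟨(k - 1) * n, hub⟩ hmem)
    rw [h1, ← Nat.sub_mul]
    have : k - (k - 1) = 1 := by omega
    rw [this, one_mul]
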